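/- Define h : ℝ × ℝ → ℂ by h(t, a) = e^{a}·(tanh(t) + i·sech(t)), where sech(t) = 1/cosh(t). Then for all t₁, t₂, a₁, a₂ ∈ ℝ the points h(t₁, a₁) and h(t₂, a₂) have strictly positive imaginary part, and the hyperbolic distance between them in the upper half-plane satisfies cosh( dist(h(t₁,a₁), h(t₂,a₂)) ) = cosh(t₁)·cosh(t₂)·cosh(a₁ − a₂) − sinh(t₁)·sinh(t₂). -/

import Mathlib

open Complex

/-- The map `h(t, a) = e^a (tanh t + i sech t)` from the doubly warped model
`[0,∞) ×_{cosh t} ℝ` of the hyperbolic plane into `ℂ`. -/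
noncomputable def warpedModelMap (t a : ℝ) : ℂ :=
  (Real.exp a : ℝ) * ((Real.tanh t : ℂ) + Complex.I * ((Real.cosh t : ℂ))⁻¹)

lemma warpedModelMap_eq (t a : ℝ) : warpedModelMap t a =
    Complex.mk (Real.exp a * Real.tanh t) (Real.exp a / Real.cosh t) := by
  have h : ((Real.cosh t : ℂ))⁻¹ = (((Real.cosh t)⁻¹ : ℝ) : ℂ) := (Complex.ofReal_inv _).symm
  rw [warpedModelMap, h]
  have hc := (Real.cosh_pos t).ne'
  apply Complex.ext <;>
    simp [Complex.mul_re, Complex.mul_im, Complex.add_re, Complex.add_im, div_eq_mul_inv,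
      -Complex.ofReal_exp, -Complex.ofReal_tanh, -Complex.ofReal_cosh] <;>
    field_simp

lemma warpedModelMap_re (t a : ℝ) : (warpedModelMap t a).re = Real.exp a * Real.tanh t := by
  rw [warpedModelMap_eq]

lemma warpedModelMap_im (t a : ℝ) : (warpedModelMap t a).im = Real.exp a / Real.cosh t := by
  rw [warpedModelMap_eq]

lemma warpedModelMap_im_pos (t a : ℝ) : 0 < (warpedModelMap t a).im := by
  rw [warpedModelMap_im]
  exact div_pos (Real.exp_pos a) (Real.cosh_pos t)

/-- **Isometry of the warped model into the hyperbolic plane.**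
For all `t₁, t₂, a₁, a₂ ∈ ℝ`, the points `h(t₁,a₁)` and `h(t₂,a₂)` lie in the upper
half-plane, and their hyperbolic distance satisfies
`cosh(dist) = cosh t₁ · cosh t₂ · cosh (a₁ − a₂) − sinh t₁ · sinh t₂`. -/
theorem warpedModelMap_cosh_dist (t₁ t₂ a₁ a₂ : ℝ) :
    ∃ (h₁ : 0 < (warpedModelMap t₁ a₁).im) (h₂ : 0 < (warpedModelMap t₂ a₂).im),
      Real.cosh (dist (UpperHalfPlane.mk (warpedModelMap t₁ a₁) h₁)
          (UpperHalfPlane.mk (warpedModelMap t₂ a₂) h₂)) =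
        Real.cosh t₁ * Real.cosh t₂ * Real.cosh (a₁ - a₂) -
          Real.sinh t₁ * Real.sinh t₂ := by
  refine ⟨warpedModelMap_im_pos t₁ a₁, warpedModelMap_im_pos t₂ a₂, ?_⟩
  rw [UpperHalfPlane.cosh_dist, UpperHalfPlane.coe_mk, UpperHalfPlane.coe_mk,
    UpperHalfPlane.mk_im, UpperHalfPlane.mk_im]
  have hdist : dist (warpedModelMap t₁ a₁) (warpedModelMap t₂ a₂) ^ 2 =
      ((warpedModelMap t₁ a₁).re - (warpedModelMap t₂ a₂).re) ^ 2 +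
      ((warpedModelMap t₁ a₁).im - (warpedModelMap t₂ a₂).im) ^ 2 := by
    rw [Complex.dist_eq, Complex.sq_norm, Complex.normSq_apply]
    simp [sq]
  rw [hdist]
  simp only [warpedModelMap_re, warpedModelMap_im]
  have c₁ := Real.cosh_pos t₁
  have c₂ := Real.cosh_pos t₂
  have e₁ := Real.exp_pos a₁
  have e₂ := Real.exp_pos a₂
  have ht₁ : Real.tanh t₁ = Real.sinh t₁ / Real.cosh t₁ := Real.tanh_eq_sinh_div_cosh t₁
  have ht₂ : Real.tanh t₂ = Real.sinh t₂ / Real.cosh t₂ := Real.tanh_eq_sinh_div_cosh t₂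
  have hs₁ : Real.cosh t₁ ^ 2 - Real.sinh t₁ ^ 2 = 1 := Real.cosh_sq_sub_sinh_sq t₁
  have hs₂ : Real.cosh t₂ ^ 2 - Real.sinh t₂ ^ 2 = 1 := Real.cosh_sq_sub_sinh_sq t₂
  have key : Real.cosh (a₁ - a₂) * (2 * Real.exp a₁ * Real.exp a₂) =
      Real.exp a₁ ^ 2 + Real.exp a₂ ^ 2 := by
    rw [Real.cosh_eq, Real.exp_neg, Real.exp_sub]
    field_simp [Real.exp_ne_zero]
  rw [ht₁, ht₂]
  field_simp
  linear_combination
    (-(Real.exp a₁ ^ 2 * Real.cosh t₂ ^ 2)) * hs₁ +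
    (-(Real.exp a₂ ^ 2 * Real.cosh t₁ ^ 2)) * hs₂ +
    (-(Real.cosh t₁ * Real.cosh t₂) ^ 2) * key
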